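/- Let G be block-decomposable and let o be a node with exactly three outgoing edges and exactly one incoming edge, such that the node p at the other end of the incoming edge has degree at least 2 in G. Then in every block decomposition of G one of the following holds: (i) the incoming edge and one of the outgoing edges belong to a common triangle block containing o, and the remaining two outgoing edges form an outfork block with outlet o; or (ii) the incoming edge and two of the outgoing edges belong to a common diamond block with o as one of its outlets, and the remaining outgoing edge is a spike block. In particular, the incoming edge never belongs to a fork, square, or spike block. -/

import Mathlib

/-- The six block shapes: spike, triangle, infork, outfork, diamond, square. -/
inductive BlockShape : Type
  | spike | triangle | infork | outfork | diamond | square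
  deriving DecidableEq

namespace BlockShape

/-- Number of nodes of each block shape. -/
def numNodes : BlockShape → ℕ
  | spike => 2
  | triangle => 3
  | infork => 3
  | outfork => 3
  | diamond => 4
  | square => 5

/-- The directed edges of each block shape.
For the spike the nodes are `x = 0, y = 1` with edge `x → y`.
For the triangle the nodes are `0, 1, 2` with edges `0 → 1 → 2 → 0`.
For the infork the nodes are `x = 0, y = 1, c = 2` with edges `x → c`, `y → c`.
For the outfork the nodes are `x = 0, y = 1, c = 2` with edges `c → x`, `c → y`.
For the diamond the nodes are `p = 0, q = 1, x = 2, y = 3` with boundary edges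
`p → x, x → q, q → y, y → p` and mid-edge `q → p`.
For the square the nodes are the center `c = 0` and corners `v1 = 1, …, v4 = 4`, with
edges `v1 → v2 → v3 → v4 → v1`, `c → v1`, `v2 → c`, `c → v3`, `v4 → c`. -/
def edges : (s : BlockShape) → List (Fin s.numNodes × Fin s.numNodes)
  | spike => ([(0, 1)] : List (Fin 2 × Fin 2))
  | triangle => ([(0, 1), (1, 2), (2, 0)] : List (Fin 3 × Fin 3))
  | infork => ([(0, 2), (1, 2)] : List (Fin 3 × Fin 3))
  | outfork => ([(2, 0), (2, 1)] : List (Fin 3 × Fin 3))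
  | diamond => ([(0, 2), (2, 1), (1, 3), (3, 0), (1, 0)] : List (Fin 4 × Fin 4))
  | square => ([(1, 2), (2, 3), (3, 4), (4, 1), (0, 1), (2, 0), (0, 3), (4, 0)] :
      List (Fin 5 × Fin 5))

/-- The outlets (white nodes) of each block shape. -/
def IsOutlet : (s : BlockShape) → Fin s.numNodes → Prop
  | spike, _ => True
  | triangle, _ => True
  | infork, i => (i : ℕ) = 2
  | outfork, i => (i : ℕ) = 2
  | diamond, i => (i : ℕ) = 0 ∨ (i : ℕ) = 1
  | square, i => (i : ℕ) = 0

/-- The degree of a node inside its block (number of incident edges). -/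
def blockDeg (s : BlockShape) (i : Fin s.numNodes) : ℕ :=
  s.edges.countP fun e => decide (e.1 = i) || decide (e.2 = i)

end BlockShape

/-- A directed multigraph on a vertex type `V` is given by its edge multiplicity
function `G : V → V → ℕ`.  It is a directed graph in our sense if it has no loops
and no 2-cycles. -/
def IsDiGraph {V : Type} (G : V → V → ℕ) : Prop :=
  (∀ v, G v v = 0) ∧ ∀ x y, G x y = 0 ∨ G y x = 0

/-- Degree of a node: the number of incident edges counted with multiplicity. -/
def degree {V : Type} [Fintype V] (G : V → V → ℕ) (v : V) : ℕ :=
  ∑ w, (G v w + G w v)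

/-- Two nodes are adjacent if some edge joins them (in either direction). -/
def Adj {V : Type} (G : V → V → ℕ) (x y : V) : Prop := 0 < G x y + G y x

/-- `Reach G x y` : `y` lies in the connected component of `x`. -/
def Reach {V : Type} (G : V → V → ℕ) : V → V → Prop := Relation.ReflTransGen (Adj G)

/-- The connected component of a node, as a finset. -/
noncomputable def component {V : Type} [Fintype V] (G : V → V → ℕ) (v : V) : Finset V :=
  letI := Classical.decPred fun w => Reach G v w
  Finset.univ.filter (Reach G v)

/-- Total number of block edges mapped onto the ordered pair `(x, y)` by the gluing data. -/
def blockMult {V : Type} [DecidableEq V] (n : ℕ) (shape : Fin n → BlockShape)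
    (emb : (b : Fin n) → Fin (shape b).numNodes → V) (x y : V) : ℕ :=
  ∑ b : Fin n, (shape b).edges.countP fun e => decide (emb b e.1 = x ∧ emb b e.2 = y)

/-- A block decomposition of the directed multigraph `G` : a finite collection of blocks
together with an identification of their nodes with the nodes of `G` such that
* each block is embedded injectively,
* nodes of two distinct blocks may be identified only if both are outlets,
* each outlet is identified with at most one other outlet (no vertex lies in three blocks),
* every vertex of `G` comes from some block, and
* the multiplicity of each edge of `G` is the number of block edges giving it minus the
  number of block edges giving the reversed edge (two parallel edges with the same
  direction are kept as a double edge; two parallel edges with opposite directions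
  annihilate each other). -/
structure BlockDecomposition {V : Type} [Fintype V] [DecidableEq V] (G : V → V → ℕ) :
    Type where
  n : ℕ
  shape : Fin n → BlockShape
  emb : (b : Fin n) → Fin (shape b).numNodes → V
  emb_inj : ∀ b, Function.Injective (emb b)
  glue_outlets : ∀ (b c : Fin n) (i : Fin (shape b).numNodes) (j : Fin (shape c).numNodes),
    emb b i = emb c j → b ≠ c → (shape b).IsOutlet i ∧ (shape c).IsOutlet j
  atMostTwo : ∀ (b c d : Fin n) (i : Fin (shape b).numNodes) (j : Fin (shape c).numNodes)
    (k : Fin (shape d).numNodes), emb b i = emb c j → emb b i = emb d k →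
    b = c ∨ b = d ∨ c = d
  covers : ∀ v : V, ∃ b i, emb b i = v
  edge_eq : ∀ x y : V, G x y = blockMult n shape emb x y - blockMult n shape emb y x

/-- The number of block edges of a decomposition lying over the ordered pair `(x, y)`. -/
def BlockDecomposition.mult {V : Type} [Fintype V] [DecidableEq V] {G : V → V → ℕ}
    (D : BlockDecomposition G) : V → V → ℕ :=
  blockMult D.n D.shape D.emb

/-- A graph is (block-)decomposable if it admits a block decomposition. -/
def Decomposable {V : Type} [Fintype V] [DecidableEq V] (G : V → V → ℕ) : Prop :=
  Nonempty (BlockDecomposition G)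

/-- The edge `e` of block `b` is annihilated in the decomposition `D` : some edge of
another block lies over the same pair of vertices with the opposite direction. -/
def BlockDecomposition.EdgeAnnihilated {V : Type} [Fintype V] [DecidableEq V]
    {G : V → V → ℕ} (D : BlockDecomposition G) (b : Fin D.n)
    (e : Fin (D.shape b).numNodes × Fin (D.shape b).numNodes) : Prop :=
  e ∈ (D.shape b).edges ∧
    ∃ (c : Fin D.n) (f : Fin (D.shape c).numNodes × Fin (D.shape c).numNodes),
      c ≠ b ∧ f ∈ (D.shape c).edges ∧ D.emb c f.1 = D.emb b e.2 ∧ D.emb c f.2 = D.emb b e.1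

namespace Stmt19
open BlockShape

instance : Fintype BlockShape where
  elems := ⟨[spike, triangle, infork, outfork, diamond, square], by decide⟩
  complete := fun x => by cases x <;> decide

instance instDecOutlet : (s : BlockShape) → (i : Fin s.numNodes) → Decidable (s.IsOutlet i)
  | spike, _ => .isTrue trivial
  | triangle, _ => .isTrue trivial
  | infork, i => inferInstanceAs (Decidable ((i : ℕ) = 2))
  | outfork, i => inferInstanceAs (Decidable ((i : ℕ) = 2))
  | diamond, i => inferInstanceAs (Decidable ((i : ℕ) = 0 ∨ (i : ℕ) = 1))
  | square, i => inferInstanceAs (Decidable ((i : ℕ) = 0))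

def outAt (s : BlockShape) (i : Fin s.numNodes) : ℕ :=
  s.edges.countP fun e => decide (e.1 = i)
def inAt (s : BlockShape) (i : Fin s.numNodes) : ℕ :=
  s.edges.countP fun e => decide (e.2 = i)

lemma outAt_le_two : ∀ s i, outAt s i ≤ 2 := by decide

lemma no_two_cycle : ∀ (s : BlockShape), ∀ e ∈ s.edges, ∀ f ∈ s.edges,
    ¬(e.1 = f.2 ∧ e.2 = f.1) := by decide

set_option synthInstance.maxSize 2000 in
set_option maxHeartbeats 1000000 in
lemma key0 : ∀ (s1 : BlockShape) (i1 : Fin s1.numNodes) (s2 : BlockShape)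
    (i2 : Fin s2.numNodes), s1.IsOutlet i1 → s2.IsOutlet i2 →
    outAt s1 i1 + outAt s2 i2 = 3 → inAt s1 i1 + inAt s2 i2 = 1 →
    (s1 = triangle ∧ s2 = outfork ∧ (i2 : ℕ) = 2) ∨
    (s2 = triangle ∧ s1 = outfork ∧ (i1 : ℕ) = 2) ∨
    (s1 = diamond ∧ (i1 : ℕ) = 1 ∧ s2 = spike ∧ (i2 : ℕ) = 0) ∨
    (s2 = diamond ∧ (i2 : ℕ) = 1 ∧ s1 = spike ∧ (i1 : ℕ) = 0) := by decide

set_option synthInstance.maxSize 2000 in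
set_option maxHeartbeats 1000000 in
lemma key1 : ∀ (s1 : BlockShape) (i1 : Fin s1.numNodes) (s2 : BlockShape)
    (i2 : Fin s2.numNodes), s1.IsOutlet i1 → s2.IsOutlet i2 →
    outAt s1 i1 + outAt s2 i2 = 4 → inAt s1 i1 + inAt s2 i2 = 2 →
    ∀ e ∈ s1.edges, ∀ f ∈ s2.edges, e.1 = i1 → f.2 = i2 →
    ¬(s1.IsOutlet e.2 ∧ s2.IsOutlet f.1) := by decide

lemma outfork_no_in : ∀ (s : BlockShape), s = outfork → ∀ f ∈ s.edges,
    ∀ i : Fin s.numNodes, (i : ℕ) = 2 → f.2 ≠ i := by decide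

lemma spike_no_in : ∀ (s : BlockShape), s = spike → ∀ f ∈ s.edges,
    ∀ i : Fin s.numNodes, (i : ℕ) = 0 → f.2 ≠ i := by decide

lemma triangle_out : ∀ (s : BlockShape), s = triangle → ∀ i : Fin s.numNodes,
    ∃ e ∈ s.edges, e.1 = i := by decide

variable {V : Type} [Fintype V] [DecidableEq V]

lemma sum_countP_fiber {α : Type} (l : List α) (P : α → Prop) [DecidablePred P] (f : α → V) :
    ∑ w : V, l.countP (fun e => decide (P e ∧ f e = w)) = l.countP (fun e => decide (P e)) := by
  induction l with
  | nil => simp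
  | cons a l ih =>
      simp only [List.countP_cons, Finset.sum_add_distrib, ih]
      congr 1
      by_cases hPa : P a
      · simp [hPa, Finset.sum_ite_eq]
      · simp [hPa]

lemma sum_blockMult_out (n : ℕ) (shape : Fin n → BlockShape)
    (emb : (b : Fin n) → Fin (shape b).numNodes → V) (x : V) :
    ∑ w : V, blockMult n shape emb x w
      = ∑ b : Fin n, (shape b).edges.countP (fun e => decide (emb b e.1 = x)) := by
  unfold blockMult
  rw [Finset.sum_comm]
  exact Finset.sum_congr rfl fun b _ => sum_countP_fiber _ _ _

lemma sum_blockMult_in (n : ℕ) (shape : Fin n → BlockShape)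
    (emb : (b : Fin n) → Fin (shape b).numNodes → V) (x : V) :
    ∑ w : V, blockMult n shape emb w x
      = ∑ b : Fin n, (shape b).edges.countP (fun e => decide (emb b e.2 = x)) := by
  unfold blockMult
  rw [Finset.sum_comm]
  refine Finset.sum_congr rfl fun b _ => ?_
  rw [show (fun w => (shape b).edges.countP fun e => decide (emb b e.1 = w ∧ emb b e.2 = x))
      = (fun w => (shape b).edges.countP fun e => decide (emb b e.2 = x ∧ emb b e.1 = w)) from
    funext fun w => List.countP_congr fun e _ => by simp only [decide_eq_true_eq]; exact and_comm]
  exact sum_countP_fiber _ _ _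

lemma countP_eq_outAt (s : BlockShape) (g : Fin s.numNodes → V)
    (hg : Function.Injective g) (i : Fin s.numNodes) (x : V) (hx : g i = x) :
    (s.edges.countP fun e => decide (g e.1 = x)) = outAt s i :=
  List.countP_congr fun e _ => by
    simp only [decide_eq_true_eq]
    exact ⟨fun h => hg (h.trans hx.symm), fun h => h ▸ hx⟩

lemma countP_eq_inAt (s : BlockShape) (g : Fin s.numNodes → V)
    (hg : Function.Injective g) (i : Fin s.numNodes) (x : V) (hx : g i = x) :
    (s.edges.countP fun e => decide (g e.2 = x)) = inAt s i :=
  List.countP_congr fun e _ => by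
    simp only [decide_eq_true_eq]
    exact ⟨fun h => hg (h.trans hx.symm), fun h => h ▸ hx⟩

lemma countP_out_zero (s : BlockShape) (g : Fin s.numNodes → V) (x : V)
    (hx : ∀ i, g i ≠ x) : (s.edges.countP fun e => decide (g e.1 = x)) = 0 :=
  List.countP_eq_zero.mpr fun e _ => by simpa using hx e.1

lemma countP_in_zero (s : BlockShape) (g : Fin s.numNodes → V) (x : V)
    (hx : ∀ i, g i ≠ x) : (s.edges.countP fun e => decide (g e.2 = x)) = 0 :=
  List.countP_eq_zero.mpr fun e _ => by simpa using hx e.2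

lemma blockMult_pos (n : ℕ) (shape : Fin n → BlockShape)
    (emb : (b : Fin n) → Fin (shape b).numNodes → V) (x y : V)
    (h : 0 < blockMult n shape emb x y) :
    ∃ b, ∃ e ∈ (shape b).edges, emb b e.1 = x ∧ emb b e.2 = y := by
  unfold blockMult at h
  obtain ⟨b, -, hb⟩ := Finset.exists_ne_zero_of_sum_ne_zero (Nat.pos_iff_ne_zero.mp h)
  obtain ⟨e, he, hee⟩ := List.countP_pos_iff.mp (Nat.pos_of_ne_zero hb)
  exact ⟨b, e, he, by simpa using hee⟩

end Stmt19
/-- let `o` be a node of a block-decomposable graph with exactly three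
outgoing edges and exactly one incoming edge, coming from a node `p` of degree at
least 2.  Then in every block decomposition either (i) the incoming edge and one of
the outgoing edges lie in a common triangle block containing `o` and the remaining two
outgoing edges form an outfork block with outlet `o`, or (ii) the incoming edge and two
of the outgoing edges lie in a common diamond block with `o` as one of its outlets and
the remaining outgoing edge is a spike block.  In particular the incoming edge never
lies in a fork, square or spike block. -/
theorem stmt_19 {V : Type} [Fintype V] [DecidableEq V] (G : V → V → ℕ)
    (hG : IsDiGraph G) (o p : V)
    (hout : (∑ w, G o w) = 3) (hin : (∑ w, G w o) = 1)
    (hp : G p o = 1) (hpdeg : 2 ≤ degree G p) :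
    ∀ D : BlockDecomposition G,
      (∀ (b : Fin D.n) (e : Fin (D.shape b).numNodes × Fin (D.shape b).numNodes),
        e ∈ (D.shape b).edges → D.emb b e.1 = p → D.emb b e.2 = o →
        D.shape b ≠ BlockShape.infork ∧ D.shape b ≠ BlockShape.outfork ∧
        D.shape b ≠ BlockShape.square ∧ D.shape b ≠ BlockShape.spike) ∧
      ((∃ b : Fin D.n, D.shape b = BlockShape.triangle ∧
          (∃ e ∈ (D.shape b).edges, D.emb b e.1 = p ∧ D.emb b e.2 = o) ∧
          (∃ e ∈ (D.shape b).edges, D.emb b e.1 = o) ∧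
          (∃ b' : Fin D.n, b' ≠ b ∧ D.shape b' = BlockShape.outfork ∧
            ∃ i, D.emb b' i = o ∧ (i : ℕ) = 2)) ∨
       (∃ b : Fin D.n, D.shape b = BlockShape.diamond ∧
          (∃ e ∈ (D.shape b).edges, D.emb b e.1 = p ∧ D.emb b e.2 = o) ∧
          (∃ i, D.emb b i = o ∧ ((i : ℕ) = 0 ∨ (i : ℕ) = 1)) ∧
          (∃ b' : Fin D.n, b' ≠ b ∧ D.shape b' = BlockShape.spike ∧
            ∃ j, D.emb b' j = o ∧ (j : ℕ) = 0))) := by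
  intro D
  obtain ⟨b1, i1, hb1⟩ := D.covers o
  set μ := blockMult D.n D.shape D.emb with hμdef
  set M := ∑ w, min (μ o w) (μ w o) with hMdef
  have hA : ∑ w, μ o w = 3 + M := by
    have h1 : (3 : ℕ) + M = ∑ w, (G o w + min (μ o w) (μ w o)) := by
      rw [Finset.sum_add_distrib, hout, hMdef]
    rw [h1]
    refine Finset.sum_congr rfl fun w _ => ?_
    have h2 := D.edge_eq o w
    have h3 := D.edge_eq w o
    rw [← hμdef] at h2 h3
    omega
  have hB : ∑ w, μ w o = 1 + M := by
    have h1 : (1 : ℕ) + M = ∑ w, (G w o + min (μ o w) (μ w o)) := by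
      rw [Finset.sum_add_distrib, hin, hMdef]
    rw [h1]
    refine Finset.sum_congr rfl fun w _ => ?_
    have h2 := D.edge_eq o w
    have h3 := D.edge_eq w o
    rw [← hμdef] at h2 h3
    omega
  have houtsum : ∑ w, μ o w
      = ∑ b, (D.shape b).edges.countP (fun e => decide (D.emb b e.1 = o)) := by
    rw [hμdef]; exact Stmt19.sum_blockMult_out _ _ _ _
  have hinsum : ∑ w, μ w o
      = ∑ b, (D.shape b).edges.countP (fun e => decide (D.emb b e.2 = o)) := by
    rw [hμdef]; exact Stmt19.sum_blockMult_in _ _ _ _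
  have hclass :
      (∃ bt, ∃ bo, ∃ it : Fin (D.shape bt).numNodes, ∃ io : Fin (D.shape bo).numNodes,
        D.shape bt = BlockShape.triangle ∧ D.shape bo = BlockShape.outfork ∧
        D.emb bt it = o ∧ D.emb bo io = o ∧ (io : ℕ) = 2 ∧ bt ≠ bo ∧
        ∀ c (j : Fin (D.shape c).numNodes), D.emb c j = o → c = bt ∨ c = bo) ∨
      (∃ bd, ∃ bs, ∃ id_ : Fin (D.shape bd).numNodes, ∃ is_ : Fin (D.shape bs).numNodes,
        D.shape bd = BlockShape.diamond ∧ D.shape bs = BlockShape.spike ∧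
        D.emb bd id_ = o ∧ D.emb bs is_ = o ∧ (id_ : ℕ) = 1 ∧ (is_ : ℕ) = 0 ∧ bd ≠ bs ∧
        ∀ c (j : Fin (D.shape c).numNodes), D.emb c j = o → c = bd ∨ c = bs) := by
    by_cases h2 : ∃ b2, b2 ≠ b1 ∧ ∃ j, D.emb b2 j = o
    · obtain ⟨b2, hne21, i2, hb2⟩ := h2
      have hne : b1 ≠ b2 := fun h => hne21 h.symm
      have honly : ∀ c (j : Fin (D.shape c).numNodes), D.emb c j = o → c = b1 ∨ c = b2 := by
        intro c j hj
        rcases D.atMostTwo b1 b2 c i1 i2 j (by rw [hb1, hb2]) (by rw [hb1, hj]) with h | h | h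
        · exact absurd h hne
        · exact Or.inl h.symm
        · exact Or.inr h.symm
      have hzero : ∀ c ∈ Finset.univ, c ∉ ({b1, b2} : Finset (Fin D.n)) →
          ∀ j, D.emb c j ≠ o := by
        intro c _ hc j hj
        rcases honly c j hj with rfl | rfl <;> simp at hc
      have hout12 : ∑ b, ((D.shape b).edges.countP fun e => decide (D.emb b e.1 = o))
          = Stmt19.outAt (D.shape b1) i1 + Stmt19.outAt (D.shape b2) i2 := by
        have hsub : ∑ b ∈ ({b1, b2} : Finset (Fin D.n)),
              ((D.shape b).edges.countP fun e => decide (D.emb b e.1 = o))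
            = ∑ b, ((D.shape b).edges.countP fun e => decide (D.emb b e.1 = o)) :=
          Finset.sum_subset (Finset.subset_univ _)
            (fun c hcu hc => Stmt19.countP_out_zero _ _ _ (hzero c hcu hc))
        rw [← hsub, Finset.sum_pair hne,
          Stmt19.countP_eq_outAt _ _ (D.emb_inj b1) i1 o hb1,
          Stmt19.countP_eq_outAt _ _ (D.emb_inj b2) i2 o hb2]
      have hin12 : ∑ b, ((D.shape b).edges.countP fun e => decide (D.emb b e.2 = o))
          = Stmt19.inAt (D.shape b1) i1 + Stmt19.inAt (D.shape b2) i2 := by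
        have hsub : ∑ b ∈ ({b1, b2} : Finset (Fin D.n)),
              ((D.shape b).edges.countP fun e => decide (D.emb b e.2 = o))
            = ∑ b, ((D.shape b).edges.countP fun e => decide (D.emb b e.2 = o)) :=
          Finset.sum_subset (Finset.subset_univ _)
            (fun c hcu hc => Stmt19.countP_in_zero _ _ _ (hzero c hcu hc))
        rw [← hsub, Finset.sum_pair hne,
          Stmt19.countP_eq_inAt _ _ (D.emb_inj b1) i1 o hb1,
          Stmt19.countP_eq_inAt _ _ (D.emb_inj b2) i2 o hb2]
      have hOut : (D.shape b1).IsOutlet i1 ∧ (D.shape b2).IsOutlet i2 :=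
        D.glue_outlets b1 b2 i1 i2 (by rw [hb1, hb2]) hne
      have h3M : Stmt19.outAt (D.shape b1) i1 + Stmt19.outAt (D.shape b2) i2 = 3 + M := by
        omega
      have h1M : Stmt19.inAt (D.shape b1) i1 + Stmt19.inAt (D.shape b2) i2 = 1 + M := by
        omega
      have hMle : M ≤ 1 := by
        have := Stmt19.outAt_le_two (D.shape b1) i1
        have := Stmt19.outAt_le_two (D.shape b2) i2
        omega
      have hM0 : M = 0 := by
        by_contra hMne0
        have hMne : M ≠ 0 := hMne0
        rw [hMdef] at hMne
        obtain ⟨w, -, hw⟩ := Finset.exists_ne_zero_of_sum_ne_zero hMne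
        have haw : 0 < μ o w := by omega
        have hbw : 0 < μ w o := by omega
        rw [hμdef] at haw hbw
        obtain ⟨c, e, he, hce1, hce2⟩ := Stmt19.blockMult_pos _ _ _ o w haw
        obtain ⟨d, f, hf, hdf1, hdf2⟩ := Stmt19.blockMult_pos _ _ _ w o hbw
        by_cases hcd : c = d
        · subst hcd
          exact Stmt19.no_two_cycle _ e he f hf
            ⟨D.emb_inj c (hce1.trans hdf2.symm), D.emb_inj c (hce2.trans hdf1.symm)⟩
        · have hOO := D.glue_outlets c d e.2 f.1 (hce2.trans hdf1.symm) hcd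
          rcases honly c e.1 hce1 with rfl | rfl <;> rcases honly d f.2 hdf2 with rfl | rfl
          · exact hcd rfl
          · exact Stmt19.key1 _ i1 _ i2 hOut.1 hOut.2 (by omega) (by omega) e he f hf
              (D.emb_inj _ (hce1.trans hb1.symm)) (D.emb_inj _ (hdf2.trans hb2.symm)) hOO
          · exact Stmt19.key1 _ i2 _ i1 hOut.2 hOut.1 (by omega) (by omega) e he f hf
              (D.emb_inj _ (hce1.trans hb2.symm)) (D.emb_inj _ (hdf2.trans hb1.symm)) hOO
          · exact hcd rfl
      rcases Stmt19.key0 _ i1 _ i2 hOut.1 hOut.2 (by omega) (by omega) with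
        ⟨hs1, hs2, hv⟩ | ⟨hs1, hs2, hv⟩ | ⟨hs1, hv1, hs2, hv2⟩ | ⟨hs1, hv1, hs2, hv2⟩
      · exact Or.inl ⟨b1, b2, i1, i2, hs1, hs2, hb1, hb2, hv, hne, honly⟩
      · exact Or.inl ⟨b2, b1, i2, i1, hs1, hs2, hb2, hb1, hv, fun h => hne h.symm,
          fun c j hj => (honly c j hj).symm⟩
      · exact Or.inr ⟨b1, b2, i1, i2, hs1, hs2, hb1, hb2, hv1, hv2, hne, honly⟩
      · exact Or.inr ⟨b2, b1, i2, i1, hs1, hs2, hb2, hb1, hv1, hv2, fun h => hne h.symm,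
          fun c j hj => (honly c j hj).symm⟩
    · exfalso
      push_neg at h2
      have hsingle : (∑ b, ((D.shape b).edges.countP fun e => decide (D.emb b e.1 = o)))
          = Stmt19.outAt (D.shape b1) i1 := by
        rw [Finset.sum_eq_single_of_mem b1 (Finset.mem_univ b1)
          (fun c _ hc => Stmt19.countP_out_zero _ _ _ (h2 c hc))]
        exact Stmt19.countP_eq_outAt _ _ (D.emb_inj b1) i1 o hb1
      have := Stmt19.outAt_le_two (D.shape b1) i1
      omega
  have hmultpo : 0 < blockMult D.n D.shape D.emb p o := by
    have := D.edge_eq p o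
    omega
  rcases hclass with ⟨bt, bo, it, io, hst, hso, hit, hio, hio2, hbto, honly⟩ |
      ⟨bd, bs, id_, is_, hsd, hss, hid, his, hid1, his0, hbds, honly⟩
  · have hto : ∀ c (f : Fin (D.shape c).numNodes × Fin (D.shape c).numNodes),
        f ∈ (D.shape c).edges → D.emb c f.2 = o → c = bt := by
      intro c f hf h2o
      rcases honly c f.2 h2o with rfl | rfl
      · rfl
      · exact absurd (D.emb_inj _ (h2o.trans hio.symm))
          (Stmt19.outfork_no_in _ hso f hf io hio2)
    constructor
    · intro c e he hep heo
      have hc := hto c e he heo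
      subst hc
      rw [hst]
      exact ⟨by decide, by decide, by decide, by decide⟩
    · left
      obtain ⟨c, e, he, hep, heo⟩ := Stmt19.blockMult_pos _ _ _ p o hmultpo
      have hc := hto c e he heo
      subst hc
      obtain ⟨e2, he2, he2i⟩ := Stmt19.triangle_out _ hst it
      exact ⟨c, hst, ⟨e, he, hep, heo⟩, ⟨e2, he2, by rw [he2i, hit]⟩,
        bo, fun h => hbto h.symm, hso, io, hio, hio2⟩
  · have hto : ∀ c (f : Fin (D.shape c).numNodes × Fin (D.shape c).numNodes),
        f ∈ (D.shape c).edges → D.emb c f.2 = o → c = bd := by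
      intro c f hf h2o
      rcases honly c f.2 h2o with rfl | rfl
      · rfl
      · exact absurd (D.emb_inj _ (h2o.trans his.symm))
          (Stmt19.spike_no_in _ hss f hf is_ his0)
    constructor
    · intro c e he hep heo
      have hc := hto c e he heo
      subst hc
      rw [hsd]
      exact ⟨by decide, by decide, by decide, by decide⟩
    · right
      obtain ⟨c, e, he, hep, heo⟩ := Stmt19.blockMult_pos _ _ _ p o hmultpo
      have hc := hto c e he heo
      subst hc
      exact ⟨c, hsd, ⟨e, he, hep, heo⟩, ⟨id_, hid, Or.inr hid1⟩,
        bs, fun h => hbds h.symm, hss, is_, his, his0⟩
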